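/- Let R be a norm on ℝ^p with dual norm R*(z) = sup{zᵀw : R(w) ≤ 1}, let L : ℝ^p → ℝ be convex and differentiable, let λ > 0, β* ∈ ℝ^p, r > 0, and let β̃ be a minimizer of β ↦ L(β) + λ·R(β) over the closed Euclidean ball {β : ‖β − β*‖₂ ≤ r}. Assume (deviation condition) R*(∇L(β*)) ≤ λ/2, and (restricted eigenvalue condition) there is α > 0 such that L(β* + u) − L(β*) − ∇L(β*)ᵀu ≥ α‖u‖₂² for every u with ‖u‖₂ ≤ r and R(u)/2 + R(β*) − R(β* + u) ≥ 0. Let Φ := sup{R(u)/‖u‖₂ : u ≠ 0, R(u)/2 + R(β*) − R(β* + u) ≥ 0} and assume Φ < ∞. Then the error vector v := β̃ − β* satisfies R(v)/2 + R(β*) − R(β* + v) ≥ 0, ‖v‖₂ ≤ 3λΦ/(2α), and R(v) ≤ 3λΦ²/(2α). -/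

import Mathlib

open scoped RealInnerProductSpace

lemma convex_grad_ineq {p : ℕ} (L : EuclideanSpace ℝ (Fin p) → ℝ)
    (hL_conv : ConvexOn ℝ Set.univ L)
    (hL_diff : ∀ x, DifferentiableAt ℝ L x)
    (βs u : EuclideanSpace ℝ (Fin p)) :
    ⟪gradient L βs, u⟫ ≤ L (βs + u) - L βs := by
  have hgrad : HasFDerivAt L ((InnerProductSpace.toDual ℝ _) (gradient L βs)) βs :=
    ((hL_diff βs).hasGradientAt).hasFDerivAt
  set φ : ℝ → ℝ := fun t => L (βs + t • u) with hφ
  have hc : HasDerivAt (fun t : ℝ => βs + t • u) u 0 := by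
    simpa using ((hasDerivAt_id (0:ℝ)).smul_const u).const_add βs
  have hd : HasDerivAt φ ⟪gradient L βs, u⟫ 0 := by
    have hgrad' : HasFDerivAt L ((InnerProductSpace.toDual ℝ _) (gradient L βs))
        (βs + (0:ℝ) • u) := by simpa using hgrad
    have := hgrad'.comp_hasDerivAt (0:ℝ) hc
    simpa [InnerProductSpace.toDual_apply_apply, Function.comp_def] using this
  have hconv : ConvexOn ℝ Set.univ φ := by
    have := hL_conv.comp_affineMap (AffineMap.lineMap βs (βs + u))
    have heq : ∀ t : ℝ, (L ∘ (AffineMap.lineMap βs (βs + u))) t = φ t := by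
      intro t; simp [AffineMap.lineMap_apply, hφ, add_comm]
    rw [show φ = L ∘ (AffineMap.lineMap βs (βs + u)) from funext fun t => (heq t).symm]
    exact this.subset (Set.subset_univ _) (convex_univ)
  have h01 : (0:ℝ) < 1 := one_pos
  have := hconv.deriv_le_slope (Set.mem_univ 0) (Set.mem_univ 1) h01 hd.differentiableAt
  rw [hd.deriv] at this
  simpa [slope, φ] using this

/-- **Deterministic error bound for the locally constrained penalized robust estimator.**
If the deviation condition `R*(∇L(β*)) ≤ λ/2` and the restricted eigenvalue condition hold,
then the error vector `v = β̃ - β*` lies in the anti-concentration cone and satisfies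
`‖v‖₂ ≤ 3λΦ/(2α)` and `R(v) ≤ 3λΦ²/(2α)`. -/
theorem robust_penalized_error_bound {p : ℕ}
    (R : EuclideanSpace ℝ (Fin p) → ℝ)
    (hR_add : ∀ x y, R (x + y) ≤ R x + R y)
    (hR_smul : ∀ (c : ℝ) (x), R (c • x) = |c| * R x)
    (hR_pos : ∀ x, x ≠ 0 → 0 < R x)
    (L : EuclideanSpace ℝ (Fin p) → ℝ)
    (hL_conv : ConvexOn ℝ Set.univ L)
    (hL_diff : ∀ x, DifferentiableAt ℝ L x)
    (lam : ℝ) (hlam : 0 < lam)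
    (βs βt : EuclideanSpace ℝ (Fin p)) (r : ℝ) (hr : 0 < r)
    -- `βt` is a minimizer of `L + lam • R` over the closed ball of radius `r` around `βs`
    (hfeas : ‖βt - βs‖ ≤ r)
    (hmin : ∀ β, ‖β - βs‖ ≤ r → L βt + lam * R βt ≤ L β + lam * R β)
    -- deviation condition: the dual norm of the gradient at `βs` is at most `lam/2`
    (hdev : ∀ w, R w ≤ 1 → ⟪gradient L βs, w⟫ ≤ lam / 2)
    -- restricted eigenvalue condition on the cone intersected with the ball
    (α : ℝ) (hα : 0 < α)
    (hRE : ∀ u, ‖u‖ ≤ r → R u / 2 + R βs - R (βs + u) ≥ 0 →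
      L (βs + u) - L βs - ⟪gradient L βs, u⟫ ≥ α * ‖u‖ ^ 2)
    -- `Φ` is an upper bound for the subspace compatibility constant of the cone
    (Φ : ℝ) (hΦ0 : 0 ≤ Φ)
    (hΦ : ∀ u, u ≠ 0 → R u / 2 + R βs - R (βs + u) ≥ 0 → R u ≤ Φ * ‖u‖) :
    R (βt - βs) / 2 + R βs - R (βs + (βt - βs)) ≥ 0 ∧
    ‖βt - βs‖ ≤ 3 * lam * Φ / (2 * α) ∧
    R (βt - βs) ≤ 3 * lam * Φ ^ 2 / (2 * α) := by
  have hR0 : R 0 = 0 := by simpa using hR_smul 0 0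
  have hRneg : ∀ x, R (-x) = R x := fun x => by simpa using hR_smul (-1) x
  have hRnonneg : ∀ x, 0 ≤ R x := by
    intro x
    rcases eq_or_ne x 0 with h | h
    · simp [h, hR0]
    · exact (hR_pos x h).le
  set v := βt - βs with hv
  have hβt : βs + v = βt := by simp [hv]
  -- bounds on the inner product
  have hinner_ub : ⟪gradient L βs, v⟫ ≤ lam / 2 * R v := by
    rcases eq_or_ne v 0 with h | h
    · simp [h, hR0]
    · have hRv := hR_pos v h
      have hw : R ((R v)⁻¹ • v) ≤ 1 := by
        rw [hR_smul, abs_of_pos (by positivity)]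
        field_simp
        exact le_rfl
      have := hdev _ hw
      rw [real_inner_smul_right] at this
      calc ⟪gradient L βs, v⟫ = R v * ((R v)⁻¹ * ⟪gradient L βs, v⟫) := by
            field_simp
        _ ≤ R v * (lam / 2) := by
            exact mul_le_mul_of_nonneg_left this hRv.le
        _ = lam / 2 * R v := by ring
  have hinner_lb : -(lam / 2 * R v) ≤ ⟪gradient L βs, v⟫ := by
    rcases eq_or_ne v 0 with h | h
    · simp [h, hR0]
    · have hRv := hR_pos v h
      have hw : R (-((R v)⁻¹ • v)) ≤ 1 := by
        rw [hRneg, hR_smul, abs_of_pos (by positivity)]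
        field_simp
        exact le_rfl
      have := hdev _ hw
      rw [inner_neg_right, real_inner_smul_right] at this
      have : -(lam / 2) ≤ (R v)⁻¹ * ⟪gradient L βs, v⟫ := by linarith
      nlinarith [mul_le_mul_of_nonneg_left this hRv.le,
        mul_inv_cancel₀ (ne_of_gt hRv)]
  -- basic inequality from minimality
  have hbasic : L βt - L βs ≤ lam * (R βs - R βt) := by
    have := hmin βs (by simp [hr.le])
    linarith
  -- convexity lower bound
  have hconv : ⟪gradient L βs, v⟫ ≤ L βt - L βs := by
    have := convex_grad_ineq L hL_conv hL_diff βs v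
    rwa [hβt] at this
  -- cone membership
  have hcone : R v / 2 + R βs - R (βs + v) ≥ 0 := by
    rw [hβt]
    have h1 : -(lam / 2 * R v) ≤ lam * (R βs - R βt) := by linarith
    nlinarith
  -- R βs - R βt ≤ R v
  have htri : R βs - R βt ≤ R v := by
    have := hR_add βt (-v)
    have hb : βt + -v = βs := by simp [hv]
    rw [hb, hRneg] at this
    linarith
  -- restricted eigenvalue
  have hre := hRE v hfeas hcone
  rw [hβt] at hre
  have hkey : α * ‖v‖ ^ 2 ≤ 3 / 2 * lam * R v := by nlinarith
  -- R v ≤ Φ * ‖v‖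
  have hRΦ : R v ≤ Φ * ‖v‖ := by
    rcases eq_or_ne v 0 with h | h
    · simp [h, hR0]
    · exact hΦ v h hcone
  have hnorm : ‖v‖ ≤ 3 * lam * Φ / (2 * α) := by
    rw [le_div_iff₀ (by positivity)]
    nlinarith [mul_le_mul_of_nonneg_left hRΦ (by positivity : (0:ℝ) ≤ 3/2*lam),
      norm_nonneg v, mul_nonneg (mul_nonneg (by norm_num : (0:ℝ) ≤ 3) hlam.le) hΦ0]
  refine ⟨hcone, hnorm, ?_⟩
  calc R v ≤ Φ * ‖v‖ := hRΦ
    _ ≤ Φ * (3 * lam * Φ / (2 * α)) := by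
        exact mul_le_mul_of_nonneg_left hnorm hΦ0
    _ = 3 * lam * Φ ^ 2 / (2 * α) := by ring
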